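/- Let S be a nonempty subset of a nonempty skill set S', let (Q, S', μ') be a fuzzy skill multimap, and let (Q, S, μ) be a fuzzy skill multimap obtained by restriction: for each q ∈ Q, μ(q) = {C'·χ_S : C' ∈ μ'(q)}, where C'·χ_S is the fuzzy set on S' defined by (C'·χ_S)(s) = C'(s) for s ∈ S and 0 otherwise (assume each C'·χ_S is nonzero). Let (Q, 𝒦') be the knowledge structure delineated by (Q, S', μ') and let (Q, 𝒦) be delineated by (Q, S, μ), i.e. 𝒦 = {p(F) : F a fuzzy set on S' vanishing outside S}, where p is the problem function induced by μ. If (Q, 𝒦) is discriminative then (Q, 𝒦') is discriminative, and if (Q, 𝒦) is bi-discriminative then (Q, 𝒦') is bi-discriminative. -/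
import Mathlib


/-- A fuzzy set on a set `S` of skills: a function `S → [0,1]`, ordered pointwise. -/
abbrev FuzzySet (S : Type*) := S → unitInterval

/-- The problem function induced by a fuzzy skill multimap `μ`:
`p(F) = {q | ∃ C ∈ μ(q), C ⊆ F}`. -/
def pfun {Q S : Type*} (μ : Q → Set (FuzzySet S)) (F : FuzzySet S) : Set Q :=
  {q | ∃ C ∈ μ q, C ≤ F}

/-- The knowledge structure delineated by a fuzzy skill multimap `μ`. -/
def delineated {Q S : Type*} (μ : Q → Set (FuzzySet S)) : Set (Set Q) :=
  Set.range (pfun μ)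

/-- `𝒦_q = {K ∈ 𝒦 | q ∈ K}`. -/
def Kq {Q : Type*} (𝒦 : Set (Set Q)) (q : Q) : Set (Set Q) := {K ∈ 𝒦 | q ∈ K}

/-- A knowledge structure is discriminative if `𝒦_q ≠ 𝒦_r` for distinct `q, r`. -/
def Discriminative {Q : Type*} (𝒦 : Set (Set Q)) : Prop :=
  ∀ q r : Q, q ≠ r → Kq 𝒦 q ≠ Kq 𝒦 r

/-- A knowledge structure is bi-discriminative if `𝒦_q ⊄ 𝒦_r` and `𝒦_r ⊄ 𝒦_q`
for distinct `q, r`. -/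
def BiDiscriminative {Q : Type*} (𝒦 : Set (Set Q)) : Prop :=
  ∀ q r : Q, q ≠ r → ¬ Kq 𝒦 q ⊆ Kq 𝒦 r ∧ ¬ Kq 𝒦 r ⊆ Kq 𝒦 q

/-- `μ` is a fuzzy skill multimap: each `μ(q)` is a nonempty family of nonzero fuzzy sets. -/
def FSM {Q S : Type*} (μ : Q → Set (FuzzySet S)) : Prop :=
  ∀ q, (μ q).Nonempty ∧ ∀ C ∈ μ q, C ≠ 0

/-- A molecule: a fuzzy set with exactly one skill of nonzero membership. -/
def Molecule {S : Type*} (T : FuzzySet S) : Prop := ∃! s, T s ≠ 0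

/-- A knowledge space: a knowledge structure closed under unions of arbitrary subfamilies. -/
def IsKSpace {Q : Type*} (𝒦 : Set (Set Q)) : Prop :=
  ∅ ∈ 𝒦 ∧ Set.univ ∈ 𝒦 ∧ ∀ 𝒮 ⊆ 𝒦, ⋃₀ 𝒮 ∈ 𝒦

/-- Let `S ⊆ S'` be nonempty, `(Q, S', μ')` a fuzzy skill multimap, and
`μ` its restriction to `S` given by `μ(q) = {C'·χ_S : C' ∈ μ'(q)}` (zero outside `S`),
assumed nonzero. If the knowledge structure `𝒦 = {p(F) : F vanishing outside S}`
delineated by `μ` is discriminative (resp. bi-discriminative), then the knowledge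
structure `𝒦'` delineated by `(Q, S', μ')` is discriminative (resp. bi-discriminative). -/
theorem stmt_15 {Q S' : Type*} [Nonempty Q] [Nonempty S']
    (S : Set S') (hS : S.Nonempty)
    (μ' : Q → Set (FuzzySet S')) (hFSM' : FSM μ')
    (μ : Q → Set (FuzzySet S'))
    (hμ : ∀ q, μ q = (fun C' : FuzzySet S' => S.indicator C') '' μ' q)
    (hnz : ∀ q, ∀ C ∈ μ q, C ≠ 0)
    (𝒦 : Set (Set Q))
    (h𝒦 : 𝒦 = (fun F => pfun μ F) '' {F : FuzzySet S' | ∀ s ∉ S, F s = 0}) :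
    (Discriminative 𝒦 → Discriminative (delineated μ')) ∧
    (BiDiscriminative 𝒦 → BiDiscriminative (delineated μ')) := by
  classical
  have hsub : 𝒦 ⊆ delineated μ' := by
    rintro K hK
    rw [h𝒦] at hK
    obtain ⟨F, hF, rfl⟩ := hK
    refine ⟨fun s => if s ∈ S then F s else 1, ?_⟩
    ext q
    simp only [pfun, Set.mem_setOf_eq, hμ]
    constructor
    · rintro ⟨C', hC', hle⟩
      refine ⟨S.indicator C', ⟨C', hC', rfl⟩, fun s => ?_⟩
      by_cases hs : s ∈ S
      · simpa [Set.indicator_of_mem hs, hs] using hle s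
      · simp [Set.indicator_of_notMem hs, hF s hs, unitInterval.nonneg']
    · rintro ⟨C, ⟨C', hC', rfl⟩, hle⟩
      refine ⟨C', hC', fun s => ?_⟩
      by_cases hs : s ∈ S
      · simpa [hs] using hle s
      · simp [hs, unitInterval.le_one']
  have key : ∀ q r : Q, Kq (delineated μ') q ⊆ Kq (delineated μ') r →
      Kq 𝒦 q ⊆ Kq 𝒦 r := by
    intro q r h K hK
    obtain ⟨hK𝒦, hqK⟩ := hK
    exact ⟨hK𝒦, (h ⟨hsub hK𝒦, hqK⟩).2⟩
  constructor
  · intro hd q r hqr heq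
    exact hd q r hqr (Set.Subset.antisymm (key q r heq.le) (key r q heq.ge))
  · intro hd q r hqr
    exact ⟨fun h => (hd q r hqr).1 (key q r h), fun h => (hd q r hqr).2 (key r q h)⟩
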